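/- Let X be a locally compact Hausdorff topological space. If the topological sum of countably many copies of X (i.e., Σ_{n ∈ ℕ} X) has the Moving Off Property, then for every index type ι the topological sum Σ_{i ∈ ι} X has the Moving Off Property. -/

import Mathlib

open Set Topology

/-- A family of sets indexed by `ι` is *discrete* if every point has a neighborhood
meeting at most one member of the family. -/
def IsDiscreteFamily {ι X : Type*} [TopologicalSpace X] (U : ι → Set X) : Prop :=
  ∀ x : X, ∃ V ∈ nhds x, {i : ι | (U i ∩ V).Nonempty}.Subsingleton

/-- A *moving off collection* for `X`: a family of nonempty compact sets such that every
compact set is disjoint from some member of the family. -/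
def IsMovingOff {X : Type*} [TopologicalSpace X] (𝒦 : Set (Set X)) : Prop :=
  (∀ K ∈ 𝒦, K.Nonempty) ∧ (∀ K ∈ 𝒦, IsCompact K) ∧
    ∀ L : Set X, IsCompact L → ∃ K ∈ 𝒦, Disjoint K L

/-- The *Moving Off Property*: every moving off collection contains an infinite subfamily
of pairwise distinct sets admitting a discrete open expansion. -/
def HasMOP (X : Type*) [TopologicalSpace X] : Prop :=
  ∀ 𝒦 : Set (Set X), IsMovingOff 𝒦 →
    ∃ K : ℕ → Set X, (∀ n, K n ∈ 𝒦) ∧ Function.Injective K ∧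
      ∃ U : ℕ → Set X, (∀ n, IsOpen (U n)) ∧ (∀ n, K n ⊆ U n) ∧ IsDiscreteFamily U

/-- The set of indices met by a compact set in a sigma-type is finite. -/
lemma aux_fst_finite {J X : Type*} [TopologicalSpace X] {K : Set (Σ _ : J, X)}
    (hK : IsCompact K) : (Sigma.fst '' K).Finite := by
  obtain ⟨t, ht⟩ := hK.elim_finite_subcover (fun j : J => range (Sigma.mk j))
    (fun j => isOpen_range_sigmaMk) (by
      intro p _
      exact mem_iUnion.mpr ⟨p.1, ⟨p.2, rfl⟩⟩)
  apply t.finite_toSet.subset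
  rintro _ ⟨p, hp, rfl⟩
  obtain ⟨j, hj⟩ := mem_iUnion.mp (ht hp)
  simp only [mem_iUnion, exists_prop] at hj
  obtain ⟨hjt, x, hx⟩ := hj
  · cases hx
    exact hjt

lemma aux_slice_compact {J X : Type*} [TopologicalSpace X] {L : Set (Σ _ : J, X)}
    (hL : IsCompact L) (j : J) : IsCompact (Sigma.mk j ⁻¹' L) :=
  Topology.IsClosedEmbedding.sigmaMk.isCompact_preimage hL

lemma aux_map_cont {J X : Type*} [TopologicalSpace X] (c : J → ℕ) :
    Continuous (fun p : (Σ _ : J, X) => (⟨c p.1, p.2⟩ : Σ _ : ℕ, X)) :=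
  continuous_sigma fun j => @continuous_sigmaMk ℕ (fun _ => X) _ (c j)

lemma aux_pullback {J X : Type*} [TopologicalSpace X] (c : J → ℕ) (B : Set J)
    (hinj : InjOn c B) {L : Set (Σ _ : ℕ, X)} (hL : IsCompact L) :
    ∃ A : Set (Σ _ : J, X), IsCompact A ∧ (∀ p ∈ A, p.1 ∈ B) ∧
      (∀ p : (Σ _ : J, X), p.1 ∈ B → (⟨c p.1, p.2⟩ : Σ _ : ℕ, X) ∈ L → p ∈ A) := by
  set T : Set J := {i ∈ B | ((@Sigma.mk ℕ (fun _ => X) (c i)) ⁻¹' L).Nonempty} with hT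
  have hTfin : T.Finite := by
    have h1 : (c '' T).Finite := by
      apply (aux_fst_finite hL).subset
      rintro _ ⟨i, ⟨_, x, hx⟩, rfl⟩
      exact ⟨⟨c i, x⟩, hx, rfl⟩
    exact Finite.of_finite_image h1 (hinj.mono (fun i hi => hi.1))
  refine ⟨⋃ i ∈ T, Sigma.mk i '' ((@Sigma.mk ℕ (fun _ => X) (c i)) ⁻¹' L), ?_, ?_, ?_⟩
  · exact hTfin.isCompact_biUnion fun i _ => ((aux_slice_compact hL (c i)).image continuous_sigmaMk)
  · rintro p hp
    simp only [mem_iUnion, exists_prop] at hp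
    obtain ⟨i, hiT, x, _, rfl⟩ := hp
    exact hiT.1
  · intro p hpB hpL
    simp only [mem_iUnion, exists_prop]
    exact ⟨p.1, ⟨hpB, p.2, hpL⟩, p.2, hpL, rfl⟩

lemma aux_finite_meet {W : Type*} [TopologicalSpace W] {U T : ℕ → Set W}
    (hd : IsDiscreteFamily U) (hTU : ∀ n, T n ⊆ U n) {L : Set W} (hL : IsCompact L) :
    {n | (T n ∩ L).Nonempty}.Finite := by
  choose V hV hVs using hd
  obtain ⟨t, _, ht⟩ := hL.elim_nhds_subcover V (fun y _ => hV y)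
  have hsub : {n | (T n ∩ L).Nonempty} ⊆ ⋃ y ∈ t, {n | (U n ∩ V y).Nonempty} := by
    rintro n ⟨z, hzT, hzL⟩
    obtain ⟨y, hyt, hzy⟩ := by
      have := ht hzL
      simpa only [mem_iUnion, exists_prop] using this
    simp only [mem_iUnion, exists_prop]
    exact ⟨y, hyt, z, hTU n hzT, hzy⟩
  exact (t.finite_toSet.biUnion fun y _ => (hVs y).finite).subset hsub

lemma aux_sub_mono {α : Type*} {s : Set α} (hs : s.Finite) {t : ℕ → Set α}
    (ht : Monotone t) (h : s ⊆ ⋃ n, t n) : ∃ n, s ⊆ t n := by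
  classical
  have : ∀ x : s, ∃ n, (x : α) ∈ t n := by
    intro x
    simpa only [mem_iUnion] using h x.2
  choose f hf using this
  have : Finite s := hs
  rcases isEmpty_or_nonempty s with he | hne
  · exact ⟨0, fun x hx => (he.false ⟨x, hx⟩).elim⟩
  · obtain ⟨x₀, hx₀⟩ := Finite.exists_max f
    exact ⟨f x₀, fun x hx => ht (hx₀ ⟨x, hx⟩) (hf ⟨x, hx⟩)⟩

lemma aux_step {ι X : Type*} [TopologicalSpace X] (h : HasMOP (Σ _ : ℕ, X))
    (𝒦 : Set (Set (Σ _ : ι, X))) (hmov : IsMovingOff 𝒦) (B : Set ι) (hB : B.Countable) :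
    ∃ K : ℕ → Set (Σ _ : ι, X), (∀ n, K n ∈ 𝒦) ∧
      ∀ L : Set (Σ _ : ι, X), IsCompact L → (∀ p ∈ L, p.1 ∈ B) →
        ∃ n, Disjoint (K n) L := by
  classical
  obtain ⟨f, hf⟩ := Set.countable_iff_exists_injective.mp hB
  set cm : (ι → ℕ) → ι → ℕ :=
    fun τ i => if hi : i ∈ B then 2 * f ⟨i, hi⟩ else 2 * τ i + 1 with hcm
  have hcB : ∀ (τ τ' : ι → ℕ) (i : ι), i ∈ B → cm τ i = cm τ' i := by
    intro τ τ' i hi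
    simp only [hcm, dif_pos hi]
  have hinj : InjOn (cm fun _ => 0) B := by
    intro i hi j hj hij
    simp only [hcm, dif_pos hi, dif_pos hj] at hij
    have : f ⟨i, hi⟩ = f ⟨j, hj⟩ := by omega
    exact congrArg Subtype.val (hf this)
  set 𝒯 : Set (Set (Σ _ : ℕ, X)) :=
    {S | ∃ K ∈ 𝒦, ∃ τ : ι → ℕ,
      S = (fun p : (Σ _ : ι, X) => (⟨cm τ p.1, p.2⟩ : Σ _ : ℕ, X)) '' K} with h𝒯
  have hmov𝒯 : IsMovingOff 𝒯 := by
    refine ⟨?_, ?_, ?_⟩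
    · rintro S ⟨K, hK, τ, rfl⟩
      exact (hmov.1 K hK).image _
    · rintro S ⟨K, hK, τ, rfl⟩
      exact (hmov.2.1 K hK).image (aux_map_cont _)
    · intro L hL
      obtain ⟨A, hAc, hAB, hAmem⟩ := aux_pullback (cm fun _ => 0) B hinj hL
      obtain ⟨K, hK, hKA⟩ := hmov.2.2 A hAc
      obtain ⟨N, hN⟩ : ∃ N : ℕ, ∀ m ∈ Sigma.fst '' L, m < 2 * N + 1 := by
        obtain ⟨b, hb⟩ := (aux_fst_finite hL).bddAbove
        exact ⟨b + 1, fun m hm => by have : m ≤ b := hb hm; omega⟩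
      refine ⟨_, ⟨K, hK, fun _ => N, rfl⟩, ?_⟩
      rw [Set.disjoint_left]
      rintro q ⟨p, hpK, rfl⟩ hqL
      by_cases hpB : p.1 ∈ B
      · have h1 : (⟨cm (fun _ => 0) p.1, p.2⟩ : Σ _ : ℕ, X) ∈ L := by
          rw [hcB (fun _ => 0) (fun _ => N) p.1 hpB]
          exact hqL
        exact Set.disjoint_left.mp hKA hpK (hAmem p hpB h1)
      · have h2 : cm (fun _ => N) p.1 = 2 * N + 1 := by
          simp only [hcm, dif_neg hpB]
        have h3 : (2 * N + 1) ∈ Sigma.fst '' L := ⟨_, hqL, h2⟩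
        exact absurd (hN _ h3) (by omega)
  obtain ⟨T, hT, -, U, hUo, hTU, hUd⟩ := h 𝒯 hmov𝒯
  rw [h𝒯] at hT
  choose K hK τs hTeq using hT
  refine ⟨K, hK, ?_⟩
  intro L hLc hLB
  have hLic : IsCompact
      ((fun p : (Σ _ : ι, X) => (⟨cm (fun _ => 0) p.1, p.2⟩ : Σ _ : ℕ, X)) '' L) :=
    hLc.image (aux_map_cont _)
  obtain ⟨n, hn⟩ := ((aux_finite_meet hUd hTU hLic).infinite_compl).nonempty
  simp only [mem_compl_iff, mem_setOf_eq] at hn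
  refine ⟨n, Set.disjoint_left.mpr fun p hpK hpL => hn ⟨⟨cm (τs n) p.1, p.2⟩, ?_, ?_⟩⟩
  · rw [hTeq n]
    exact ⟨p, hpK, rfl⟩
  · refine ⟨p, hpL, ?_⟩
    have := hcB (fun _ => 0) (τs n) p.1 (hLB p hpL)
    simp only [this]

/-- If countable sums of copies of a locally compact Hausdorff `X` have the MOP, then arbitrary
sums of copies of `X` have the MOP. -/
theorem mop_arbitrary_sum_of_countable_sum (X : Type*) [TopologicalSpace X] [T2Space X]
    [LocallyCompactSpace X] (h : HasMOP (Σ _ : ℕ, X)) (ι : Type*) :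
    HasMOP (Σ _ : ι, X) := by
  classical
  intro 𝒦 hmov
  choose step hstep1 hstep2 using fun (B : Set ι) (hB : B.Countable) =>
    aux_step h 𝒦 hmov B hB
  -- iterate the step, absorbing supports
  let BB : ℕ → {B : Set ι // B.Countable} := fun m =>
    Nat.rec ⟨∅, countable_empty⟩
      (fun _ prev => ⟨prev.1 ∪ ⋃ n, Sigma.fst '' (step prev.1 prev.2 n),
        prev.2.union (Set.countable_iUnion fun n =>
          (aux_fst_finite (hmov.2.1 _ (hstep1 prev.1 prev.2 n))).countable)⟩) m
  have hBBsucc : ∀ m, (BB (m + 1)).1 =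
      (BB m).1 ∪ ⋃ n, Sigma.fst '' (step (BB m).1 (BB m).2 n) := fun m => rfl
  have hmono : Monotone fun m => (BB m).1 := monotone_nat_of_le_succ (fun m => by
    rw [hBBsucc]
    exact subset_union_left)
  set Bstar : Set ι := ⋃ m, (BB m).1 with hBstar
  have hBstarc : Bstar.Countable := countable_iUnion fun m => (BB m).2
  have hsuppsub : ∀ m n p, p ∈ step (BB m).1 (BB m).2 n → p.1 ∈ Bstar := by
    intro m n p hp
    exact mem_iUnion.mpr ⟨m + 1, by
      rw [hBBsucc]
      exact Or.inr (mem_iUnion.mpr ⟨n, ⟨p, hp, rfl⟩⟩)⟩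
  have hmiss' : ∀ L : Set (Σ _ : ι, X), IsCompact L → (∀ p ∈ L, p.1 ∈ Bstar) →
      ∃ m n, Disjoint (step (BB m).1 (BB m).2 n) L := by
    intro L hL hLB
    have hsub : Sigma.fst '' L ⊆ ⋃ m, (BB m).1 := by
      rintro _ ⟨p, hp, rfl⟩
      exact hLB p hp
    obtain ⟨m, hm⟩ := aux_sub_mono (aux_fst_finite hL) hmono hsub
    obtain ⟨n, hn⟩ := hstep2 (BB m).1 (BB m).2 L hL (fun p hp => hm ⟨p, hp, rfl⟩)
    exact ⟨m, n, hn⟩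
  -- final application of h
  obtain ⟨g, hg⟩ := Set.countable_iff_exists_injective.mp hBstarc
  set cstar : ι → ℕ := fun i => if hi : i ∈ Bstar then g ⟨i, hi⟩ else 0 with hcstar
  have hinjstar : InjOn cstar Bstar := by
    intro i hi j hj hij
    simp only [hcstar, dif_pos hi, dif_pos hj] at hij
    exact congrArg Subtype.val (hg hij)
  set CC : Set (Set (Σ _ : ℕ, X)) :=
    {S | ∃ m n, S = (fun p : (Σ _ : ι, X) => (⟨cstar p.1, p.2⟩ : Σ _ : ℕ, X)) ''
      (step (BB m).1 (BB m).2 n)} with hCC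
  have hCCmov : IsMovingOff CC := by
    refine ⟨?_, ?_, ?_⟩
    · rintro S ⟨m, n, rfl⟩
      exact (hmov.1 _ (hstep1 _ _ _)).image _
    · rintro S ⟨m, n, rfl⟩
      exact (hmov.2.1 _ (hstep1 _ _ _)).image (aux_map_cont _)
    · intro L hL
      obtain ⟨A, hAc, hAB, hAmem⟩ := aux_pullback cstar Bstar hinjstar hL
      obtain ⟨m, n, hd⟩ := hmiss' A hAc hAB
      refine ⟨_, ⟨m, n, rfl⟩, ?_⟩
      rw [Set.disjoint_left]
      rintro q ⟨p, hp, rfl⟩ hqL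
      exact Set.disjoint_left.mp hd hp (hAmem p (hsuppsub m n p hp) hqL)
  obtain ⟨T, hT, hTinj, U, hUo, hTU, hUd⟩ := h CC hCCmov
  rw [hCC] at hT
  choose ms ns hTeq using hT
  refine ⟨fun j => step (BB (ms j)).1 (BB (ms j)).2 (ns j),
    fun j => hstep1 _ _ _, ?_, ?_⟩
  · intro a b hab
    apply hTinj
    rw [hTeq a, hTeq b]
    exact congrArg (fun s => (fun p : (Σ _ : ι, X) =>
      (⟨cstar p.fst, p.snd⟩ : Σ _ : ℕ, X)) '' s) hab
  · refine ⟨fun j => {p : Σ _ : ι, X |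
      p.1 ∈ Bstar ∧ (⟨cstar p.1, p.2⟩ : Σ _ : ℕ, X) ∈ U j}, ?_, ?_, ?_⟩
    · intro j
      rw [isOpen_sigma_iff]
      intro i
      by_cases hi : i ∈ Bstar
      · have he : Sigma.mk i ⁻¹' {p : Σ _ : ι, X |
            p.1 ∈ Bstar ∧ (⟨cstar p.1, p.2⟩ : Σ _ : ℕ, X) ∈ U j} =
            (fun x : X => (⟨cstar i, x⟩ : Σ _ : ℕ, X)) ⁻¹' U j := by
          ext x
          simp [hi]
        rw [he]
        exact (hUo j).preimage (@continuous_sigmaMk ℕ (fun _ => X) _ (cstar i))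
      · have he : Sigma.mk i ⁻¹' {p : Σ _ : ι, X |
            p.1 ∈ Bstar ∧ (⟨cstar p.1, p.2⟩ : Σ _ : ℕ, X) ∈ U j} = ∅ := by
          ext x
          simp [hi]
        rw [he]
        exact isOpen_empty
    · intro j p hp
      refine ⟨hsuppsub _ _ p hp, ?_⟩
      have h1 : (⟨cstar p.1, p.2⟩ : Σ _ : ℕ, X) ∈ T j := by
        rw [hTeq j]
        exact ⟨p, hp, rfl⟩
      exact hTU j h1
    · rintro ⟨i, x⟩
      by_cases hi : i ∈ Bstar
      · obtain ⟨V, hV, hVs⟩ := hUd ⟨cstar i, x⟩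
        refine ⟨(fun p : Σ _ : ι, X => (⟨cstar p.1, p.2⟩ : Σ _ : ℕ, X)) ⁻¹' V,
          (aux_map_cont cstar).continuousAt.preimage_mem_nhds hV, hVs.anti ?_⟩
        rintro j ⟨q, ⟨_, hq2⟩, hq3⟩
        exact ⟨⟨cstar q.1, q.2⟩, hq2, hq3⟩
      · refine ⟨range (Sigma.mk i), (isOpen_range_sigmaMk).mem_nhds ⟨x, rfl⟩, ?_⟩
        intro a ha b hb
        exfalso
        obtain ⟨q, hqV, y, hy⟩ := ha
        apply hi
        have : q.1 = i := by rw [← hy]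
        rw [← this]
        exact hqV.1
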